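/- arXiv:2102.09352 — 4 statements merged into one kernel-verified Lean document; each statement's English description precedes it below -/
import Mathlib

section
/- Let f ∈ Diff¹_ω(D) and let A : D → ℝ be a C¹ function such that dA_z = λ_{f(z)}∘Df_z − λ_z for every z ∈ D (i.e. dA = f*λ − λ). Then for any two Borel probability measures μ and ν on S¹ that are invariant under f|_{S¹}, one has ∫_{S¹} A dμ = ∫_{S¹} A dν. -/
open MeasureTheory Metric Set Filter Topology
open scoped Real

noncomputable section

/-- The closed unit disk in `ℂ ≅ ℝ²`. -/
def Disk : Set ℂ := Metric.closedBall 0 1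

/-- The unit circle, boundary of the closed unit disk. -/
def Circ : Set ℂ := Metric.sphere 0 1

/-- The standard Liouville form `λ_z(w) = (z₁ w₂ - z₂ w₁)/(2π)`, whose exterior
derivative is the normalized area form `ω = (1/π) du ∧ dv`. -/
def lform (z w : ℂ) : ℝ := (z.re * w.im - z.im * w.re) / (2 * Real.pi)

/-- An element of `Diff¹_ω(D)`: a `C¹` diffeomorphism of the closed unit disk onto itself
whose Jacobian determinant equals `1` at every point. -/
structure SympDiff where
  toFun : ℂ → ℂ
  invFun : ℂ → ℂ
  mapsTo : Set.MapsTo toFun Disk Disk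
  inv_mapsTo : Set.MapsTo invFun Disk Disk
  left_inv : ∀ z ∈ Disk, invFun (toFun z) = z
  right_inv : ∀ z ∈ Disk, toFun (invFun z) = z
  contDiffOn : ContDiffOn ℝ 1 toFun Disk
  inv_contDiffOn : ContDiffOn ℝ 1 invFun Disk
  jacobian : ∀ z ∈ Disk,
    LinearMap.det (fderivWithin ℝ toFun Disk z).toLinearMap = 1

/-- `A` is an action function of `f`: a `C¹` function with `dA = f*λ - λ` on the disk. -/
def IsAction (f : SympDiff) (A : ℂ → ℝ) : Prop :=
  ContDiffOn ℝ 1 A Disk ∧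
    ∀ z ∈ Disk, ∀ w : ℂ,
      fderivWithin ℝ A Disk z w =
        lform (f.toFun z) (fderivWithin ℝ f.toFun Disk z w) - lform z w

/-- `μ` is a Borel probability measure concentrated on the unit circle and invariant
under `f|_{S¹}`. -/
def IsInvariantCircleMeasure (f : SympDiff) (μ : Measure ℂ) : Prop :=
  IsProbabilityMeasure μ ∧ μ Circᶜ = 0 ∧ Measure.map f.toFun μ = μ

/-- `A` is a normalized action function of `f`: an action function whose integral over the
circle with respect to some `f|_{S¹}`-invariant probability measure vanishes. -/
def IsNormalizedAction (f : SympDiff) (A : ℂ → ℝ) : Prop :=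
  IsAction f A ∧
    ∃ μ : Measure ℂ, IsInvariantCircleMeasure f μ ∧ ∫ z, A z ∂μ = 0

/-- The `C⁰` distance between two disk diffeomorphisms (given with their inverses). -/
def d0 (f fi g gi : ℂ → ℂ) : ℝ :=
  max (⨆ z : Disk, ‖f (z : ℂ) - g (z : ℂ)‖) (⨆ z : Disk, ‖fi (z : ℂ) - gi (z : ℂ)‖)

/-- The `C¹` distance between two disk diffeomorphisms (given with their inverses). -/
def d1 (f fi g gi : ℂ → ℂ) : ℝ :=
  max (d0 f fi g gi)
    (max (⨆ z : Disk, ‖fderivWithin ℝ f Disk (z : ℂ) - fderivWithin ℝ g Disk (z : ℂ)‖)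
      (⨆ z : Disk, ‖fderivWithin ℝ fi Disk (z : ℂ) - fderivWithin ℝ gi Disk (z : ℂ)‖))

lemma uniqueDiffOn_Disk : UniqueDiffOn ℝ Disk :=
  uniqueDiffOn_convex (convex_closedBall 0 1) (by rw [Disk, interior_closedBall 0 one_ne_zero]; exact ⟨0, by simp⟩)

lemma ball_subset_Disk : Metric.ball (0:ℂ) 1 ⊆ Disk := Metric.ball_subset_closedBall

lemma interior_Disk : interior Disk = Metric.ball (0:ℂ) 1 := interior_closedBall 0 one_ne_zero

lemma Circ_subset_Disk : Circ ⊆ Disk := Metric.sphere_subset_closedBall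

lemma Disk_mem_nhds {y : ℂ} (hy : y ∈ Metric.ball (0:ℂ) 1) : Disk ∈ 𝓝 y :=
  Filter.mem_of_superset (Metric.isOpen_ball.mem_nhds hy) ball_subset_Disk

lemma mem_ball_or_circ {z : ℂ} (hz : z ∈ Disk) : z ∈ Metric.ball (0:ℂ) 1 ∨ z ∈ Circ := by
  rcases lt_or_eq_of_le (mem_closedBall.1 hz) with h | h
  · exact Or.inl (mem_ball.2 h)
  · exact Or.inr (mem_sphere.2 h)

lemma maps_ball_of_det (g : ℂ → ℂ) (hg : ContDiffOn ℝ 1 g Disk) (hmap : MapsTo g Disk Disk)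
    {y : ℂ} (hy : y ∈ Metric.ball (0:ℂ) 1)
    (hdet : (fderiv ℝ g y).det ≠ 0) :
    g y ∈ Metric.ball (0:ℂ) 1 := by
  have hca : ContDiffAt ℝ 1 g y := hg.contDiffAt (Disk_mem_nhds hy)
  have hs : HasStrictFDerivAt g (fderiv ℝ g y) y := hca.hasStrictFDerivAt one_ne_zero
  set e := (fderiv ℝ g y).toContinuousLinearEquivOfDetNeZero hdet with he
  have hs' : HasStrictFDerivAt g (e : ℂ →L[ℝ] ℂ) y := by
    rw [he, ContinuousLinearMap.coe_toContinuousLinearEquivOfDetNeZero]; exact hs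
  have hmapn : Filter.map g (𝓝 y) = 𝓝 (g y) := hs'.map_nhds_eq_of_equiv
  have hD : Disk ∈ 𝓝 (g y) := by
    rw [← hmapn, Filter.mem_map]
    exact Filter.mem_of_superset (Disk_mem_nhds hy) fun x hx => hmap hx
  have := mem_interior_iff_mem_nhds.2 hD
  rwa [interior_Disk] at this

lemma SympDiff.inj_fderivWithin (f : SympDiff) {z : ℂ} (hz : z ∈ Disk) :
    Function.Injective (fderivWithin ℝ f.toFun Disk z) := by
  have hdet : LinearMap.det (fderivWithin ℝ f.toFun Disk z).toLinearMap ≠ 0 := by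
    rw [f.jacobian z hz]; exact one_ne_zero
  have := ((fderivWithin ℝ f.toFun Disk z).toContinuousLinearEquivOfDetNeZero hdet).injective
  intro a b hab
  exact this (by simpa using hab)

lemma SympDiff.toFun_ball (f : SympDiff) {y : ℂ} (hy : y ∈ Metric.ball (0:ℂ) 1) :
    f.toFun y ∈ Metric.ball (0:ℂ) 1 := by
  apply maps_ball_of_det f.toFun f.contDiffOn f.mapsTo hy
  have : fderivWithin ℝ f.toFun Disk y = fderiv ℝ f.toFun y :=
    fderivWithin_of_mem_nhds (Disk_mem_nhds hy)
  have hj := f.jacobian y (ball_subset_Disk hy)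
  rw [this] at hj
  rw [ContinuousLinearMap.det, hj]; exact one_ne_zero

lemma SympDiff.invFun_ball (f : SympDiff) {y : ℂ} (hy : y ∈ Metric.ball (0:ℂ) 1) :
    f.invFun y ∈ Metric.ball (0:ℂ) 1 := by
  apply maps_ball_of_det f.invFun f.inv_contDiffOn f.inv_mapsTo hy
  -- derivative of invFun at y composed with D toFun at x := invFun y is id
  set x := f.invFun y with hx
  have hxD : x ∈ Disk := f.inv_mapsTo (ball_subset_Disk hy)
  have hinv_diff : DifferentiableAt ℝ f.invFun y :=
    (f.inv_contDiffOn.contDiffAt (Disk_mem_nhds hy)).differentiableAt one_ne_zero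
  have hD' : HasFDerivAt f.invFun (fderiv ℝ f.invFun y) y := hinv_diff.hasFDerivAt
  have hD : HasFDerivWithinAt f.toFun (fderivWithin ℝ f.toFun Disk x) Disk x :=
    ((f.contDiffOn.differentiableOn one_ne_zero) x hxD).hasFDerivWithinAt
  have hcomp : HasFDerivWithinAt (f.toFun ∘ f.invFun)
      ((fderivWithin ℝ f.toFun Disk x).comp (fderiv ℝ f.invFun y)) Disk y := by
    exact hD.comp y (hD'.hasFDerivWithinAt) f.inv_mapsTo
  have hid : HasFDerivWithinAt (f.toFun ∘ f.invFun)
      (ContinuousLinearMap.id ℝ ℂ) Disk y := by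
    have : HasFDerivWithinAt (fun w : ℂ => w) (ContinuousLinearMap.id ℝ ℂ) Disk y :=
      hasFDerivWithinAt_id y Disk
    exact this.congr (fun w hw => (f.right_inv w hw)) (f.right_inv y (ball_subset_Disk hy))
  have huniq : (fderivWithin ℝ f.toFun Disk x).comp (fderiv ℝ f.invFun y)
      = ContinuousLinearMap.id ℝ ℂ :=
    (uniqueDiffOn_Disk y (ball_subset_Disk hy)).eq hcomp hid
  have hdet : LinearMap.det ((fderivWithin ℝ f.toFun Disk x).comp (fderiv ℝ f.invFun y)).toLinearMap = 1 := by
    rw [huniq]; simp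
  rw [ContinuousLinearMap.toLinearMap_comp, LinearMap.det_comp, f.jacobian x hxD, one_mul] at hdet
  rw [ContinuousLinearMap.det, hdet]; exact one_ne_zero

lemma SympDiff.toFun_circ (f : SympDiff) {z : ℂ} (hz : z ∈ Circ) : f.toFun z ∈ Circ := by
  have hzD : z ∈ Disk := Circ_subset_Disk hz
  rcases mem_ball_or_circ (f.mapsTo hzD) with h | h
  · exfalso
    have := f.invFun_ball h
    rw [f.left_inv z hzD] at this
    rw [Circ, mem_sphere] at hz
    rw [mem_ball] at this
    linarith
  · exact h

-- the circle curve
def ccurve (θ : ℝ) : ℂ := Complex.exp (θ * Complex.I)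

lemma ccurve_mem_Circ (θ : ℝ) : ccurve θ ∈ Circ := by
  simp [ccurve, Circ, mem_sphere, Complex.dist_eq, Complex.norm_exp_ofReal_mul_I]

lemma hasDerivAt_ccurve (θ : ℝ) : HasDerivAt ccurve (ccurve θ * Complex.I) θ := by
  have h1 : HasDerivAt (fun θ : ℝ => (θ : ℂ) * Complex.I) Complex.I θ := by
    simpa using ((Complex.ofRealCLM.hasFDerivAt (x := θ)).comp_hasDerivAt θ
      (hasDerivAt_id θ)).mul_const Complex.I
  exact h1.cexp

lemma ccurve_periodic (θ : ℝ) : ccurve (θ + 2 * Real.pi) = ccurve θ := by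
  simp only [ccurve]
  rw [Complex.ofReal_add, add_mul, Complex.exp_add]
  norm_num [Complex.ofReal_mul, Complex.exp_two_pi_mul_I]

lemma abs_eq_one_of_circ {z : ℂ} (hz : z ∈ Circ) : ‖z‖ = 1 := by
  simpa [Circ, mem_sphere, Complex.dist_eq] using hz

lemma sq_add_sq_of_circ {z : ℂ} (hz : z ∈ Circ) : z.re ^ 2 + z.im ^ 2 = 1 := by
  have h := abs_eq_one_of_circ hz
  have := Complex.sq_norm z
  rw [h] at this
  rw [Complex.normSq_apply] at this
  nlinarith

lemma osc_le (g : ℂ → ℂ) (B : ℂ → ℝ)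
    (hg : ContDiffOn ℝ 1 g Disk) (hcirc : MapsTo g Circ Circ)
    (hinj : ∀ z ∈ Disk, Function.Injective (fderivWithin ℝ g Disk z))
    (hB : ContDiffOn ℝ 1 B Disk)
    (hdB : ∀ z ∈ Disk, ∀ w, fderivWithin ℝ B Disk z w =
        lform (g z) (fderivWithin ℝ g Disk z w) - lform z w)
    {z w : ℂ} (hz : z ∈ Circ) (hw : w ∈ Circ) : |B z - B w| ≤ 1 := by
  have pi_pos := Real.pi_pos
  set c := ccurve with hc
  have hcD : ∀ θ, c θ ∈ Disk := fun θ => Circ_subset_Disk (ccurve_mem_Circ θ)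
  set u : ℝ → ℂ := fun θ => g (c θ) with hu_def
  set Dg : ℝ → ℂ →L[ℝ] ℂ := fun θ => fderivWithin ℝ g Disk (c θ) with hDg_def
  set u' : ℝ → ℂ := fun θ => Dg θ (c θ * Complex.I) with hu'_def
  set s : ℝ → ℝ := fun θ => (u θ).re * (u' θ).im - (u θ).im * (u' θ).re with hs_def
  set φ : ℝ → ℝ := fun θ => 2 * Real.pi * B (c θ) + θ with hφ_def
  -- u has derivative u'
  have hu : ∀ θ, HasDerivAt u (u' θ) θ := by
    intro θ
    have hgd : HasFDerivWithinAt g (Dg θ) Disk (c θ) :=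
      ((hg.differentiableOn one_ne_zero) _ (hcD θ)).hasFDerivWithinAt
    have := hgd.comp_hasDerivWithinAt θ
      ((hasDerivAt_ccurve θ).hasDerivWithinAt : HasDerivWithinAt c _ univ θ)
      (fun x _ => hcD x)
    rw [hasDerivWithinAt_univ] at this
    exact this
  have huCirc : ∀ θ, u θ ∈ Circ := fun θ => hcirc (ccurve_mem_Circ θ)
  -- orthogonality
  have orth : ∀ θ, (u θ).re * (u' θ).re + (u θ).im * (u' θ).im = 0 := by
    intro θ
    have hre : HasDerivAt (fun t => (u t).re) ((u' θ).re) θ :=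
      (Complex.reCLM.hasFDerivAt).comp_hasDerivAt θ (hu θ)
    have him : HasDerivAt (fun t => (u t).im) ((u' θ).im) θ :=
      (Complex.imCLM.hasFDerivAt).comp_hasDerivAt θ (hu θ)
    have hq : HasDerivAt (fun t => (u t).re ^ 2 + (u t).im ^ 2)
        (2 * (u θ).re ^ 1 * (u' θ).re + 2 * (u θ).im ^ 1 * (u' θ).im) θ :=
      (hre.pow 2).add (him.pow 2)
    have hconst : (fun t => (u t).re ^ 2 + (u t).im ^ 2) = fun _ => (1:ℝ) :=
      funext fun t => sq_add_sq_of_circ (huCirc t)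
    rw [hconst] at hq
    have := hq.unique (hasDerivAt_const θ 1)
    nlinarith [this]
  have unit : ∀ θ, (u θ).re ^ 2 + (u θ).im ^ 2 = 1 := fun θ => sq_add_sq_of_circ (huCirc θ)
  -- u' never zero
  have hu'ne : ∀ θ, u' θ ≠ 0 := by
    intro θ h0
    have hne : c θ * Complex.I ≠ 0 := by
      apply mul_ne_zero _ Complex.I_ne_zero
      exact Complex.exp_ne_zero _
    apply hne
    apply hinj _ (hcD θ)
    rw [show (Dg θ) (c θ * Complex.I) = u' θ from rfl, h0, map_zero]
  -- s never zero
  have hsne : ∀ θ, s θ ≠ 0 := by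
    intro θ h0
    have h1 : (u' θ).re ^ 2 + (u' θ).im ^ 2 ≠ 0 := by
      intro h
      apply hu'ne θ
      have h2 : (u' θ).re = 0 ∧ (u' θ).im = 0 := by constructor <;> nlinarith [sq_nonneg (u' θ).re, sq_nonneg (u' θ).im]
      exact Complex.ext h2.1 h2.2
    apply h1
    have ho := orth θ
    have hn := unit θ
    have h0' : (u θ).re * (u' θ).im - (u θ).im * (u' θ).re = 0 := h0
    have key : (u' θ).re ^ 2 + (u' θ).im ^ 2 =
        ((u θ).re * (u' θ).im - (u θ).im * (u' θ).re) ^ 2 +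
        ((u θ).re * (u' θ).re + (u θ).im * (u' θ).im) ^ 2 := by
      linear_combination (-((u' θ).re ^ 2 + (u' θ).im ^ 2)) * hn
    rw [key, h0', ho]
    norm_num
  -- derivative of φ
  have hφ' : ∀ θ, HasDerivAt φ (s θ) θ := by
    intro θ
    have hBd : HasFDerivWithinAt B (fderivWithin ℝ B Disk (c θ)) Disk (c θ) :=
      ((hB.differentiableOn one_ne_zero) _ (hcD θ)).hasFDerivWithinAt
    have hBc : HasDerivAt (fun t => B (c t)) (fderivWithin ℝ B Disk (c θ) (c θ * Complex.I)) θ := by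
      have := hBd.comp_hasDerivWithinAt θ
        ((hasDerivAt_ccurve θ).hasDerivWithinAt : HasDerivWithinAt c _ univ θ)
        (fun x _ => hcD x)
      rw [hasDerivWithinAt_univ] at this
      exact this
    have hval : fderivWithin ℝ B Disk (c θ) (c θ * Complex.I)
        = s θ / (2 * Real.pi) - 1 / (2 * Real.pi) := by
      rw [hdB _ (hcD θ)]
      have h1 : lform (g (c θ)) (Dg θ (c θ * Complex.I)) = s θ / (2 * Real.pi) := by
        rw [lform, hs_def]
      have h2 : lform (c θ) (c θ * Complex.I) = 1 / (2 * Real.pi) := by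
        rw [lform, Complex.mul_I_im, Complex.mul_I_re]
        have hn := sq_add_sq_of_circ (ccurve_mem_Circ θ)
        have h3 : (c θ).re * (c θ).re - (c θ).im * -(c θ).im = 1 := by nlinarith [hn]
        rw [h3]
      rw [h1, h2]
    have := ((hBc.const_mul (2 * Real.pi)).add (hasDerivAt_id θ))
    rw [hval] at this
    have heq : 2 * Real.pi * (s θ / (2 * Real.pi) - 1 / (2 * Real.pi)) + 1 = s θ := by
      field_simp; ring
    rw [heq] at this
    exact this
  -- continuity of s
  have ccont : Continuous c := by
    rw [hc]
    exact Complex.continuous_exp.comp (by continuity)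
  have ucont : Continuous u :=
    hg.continuousOn.comp_continuous ccont hcD
  have Dgcont : Continuous Dg :=
    (hg.continuousOn_fderivWithin uniqueDiffOn_Disk le_rfl).comp_continuous ccont hcD
  have u'cont : Continuous u' :=
    Dgcont.clm_apply (ccont.mul continuous_const)
  have scont : Continuous s := by
    apply Continuous.sub
    · exact (Complex.continuous_re.comp ucont).mul (Complex.continuous_im.comp u'cont)
    · exact (Complex.continuous_im.comp ucont).mul (Complex.continuous_re.comp u'cont)
  -- periodicity of φ
  have φper : ∀ θ, φ (θ + 2 * Real.pi) = φ θ + 2 * Real.pi := by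
    intro θ
    simp only [hφ_def]
    rw [hc, ccurve_periodic]
    ring
  -- positivity of s
  have spos : ∀ θ, 0 < s θ := by
    by_contra hcon
    push_neg at hcon
    obtain ⟨θ₀, hθ₀⟩ := hcon
    have hθ₀' : s θ₀ < 0 := lt_of_le_of_ne hθ₀ (hsne θ₀)
    have hneg : ∀ θ, s θ < 0 := by
      intro θ
      rcases lt_or_ge (s θ) 0 with h | h
      · exact h
      · exfalso
        have h0mem : (0:ℝ) ∈ uIcc (s θ₀) (s θ) := by
          rw [Set.mem_uIcc]
          left; exact ⟨le_of_lt hθ₀', h⟩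
        have := intermediate_value_uIcc (scont.continuousOn (s := uIcc θ₀ θ))
        obtain ⟨θ₁, _, hθ₁⟩ := this h0mem
        exact hsne θ₁ hθ₁
    have hanti : StrictAnti φ := strictAnti_of_deriv_neg (fun θ => by
      rw [(hφ' θ).deriv]; exact hneg θ)
    have := hanti (show (0:ℝ) < 0 + 2 * Real.pi by linarith)
    rw [φper 0] at this
    linarith
  have mono : StrictMono φ := strictMono_of_deriv_pos (fun θ => by
    rw [(hφ' θ).deriv]; exact spos θ)
  -- key oscillation estimate
  have key : ∀ a b : ℝ, a ≤ b → b ≤ a + 2 * Real.pi →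
      |B (c b) - B (c a)| ≤ 1 := by
    intro a b hab hba
    have h1 : φ a ≤ φ b := mono.monotone hab
    have h2 : φ b ≤ φ a + 2 * Real.pi := by
      rw [← φper a]
      exact mono.monotone hba
    simp only [hφ_def] at h1 h2
    rw [abs_le]
    constructor <;> nlinarith
  -- conclude
  have hzc : z = c (Complex.arg z) := by
    rw [hc, ccurve]
    conv_lhs => rw [← Complex.norm_mul_exp_arg_mul_I z]
    rw [abs_eq_one_of_circ hz]
    simp
  have hwc : w = c (Complex.arg w) := by
    rw [hc, ccurve]
    conv_lhs => rw [← Complex.norm_mul_exp_arg_mul_I w]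
    rw [abs_eq_one_of_circ hw]
    simp
  rcases le_total (Complex.arg z) (Complex.arg w) with h | h
  · rw [abs_sub_comm, hzc, hwc]
    apply key _ _ h
    have h1 := Complex.arg_le_pi w
    have h2 := Complex.neg_pi_lt_arg z
    linarith
  · rw [hzc, hwc]
    apply key _ _ h
    have h1 := Complex.arg_le_pi z
    have h2 := Complex.neg_pi_lt_arg w
    linarith

lemma iter_pack (f : SympDiff) (A : ℂ → ℝ) (hA : IsAction f A) (n : ℕ) :
    MapsTo (f.toFun^[n]) Disk Disk ∧ MapsTo (f.toFun^[n]) Circ Circ ∧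
    ContDiffOn ℝ 1 (f.toFun^[n]) Disk ∧
    (∀ z ∈ Disk, Function.Injective (fderivWithin ℝ (f.toFun^[n]) Disk z)) ∧
    ContDiffOn ℝ 1 (fun z => ∑ k ∈ Finset.range n, A (f.toFun^[k] z)) Disk ∧
    (∀ z ∈ Disk, ∀ w,
      fderivWithin ℝ (fun z => ∑ k ∈ Finset.range n, A (f.toFun^[k] z)) Disk z w =
        lform (f.toFun^[n] z) (fderivWithin ℝ (f.toFun^[n]) Disk z w) - lform z w) := by
  induction n with
  | zero =>
    simp only [Function.iterate_zero, Finset.range_zero, Finset.sum_empty]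
    refine ⟨mapsTo_id _, mapsTo_id _, contDiffOn_id, ?_, contDiffOn_const, ?_⟩
    · intro z hz
      rw [fderivWithin_id (uniqueDiffOn_Disk z hz)]
      exact fun a b h => h
    · intro z hz w
      rw [fderivWithin_const_apply 0, fderivWithin_id (uniqueDiffOn_Disk z hz)]
      simp
  | succ n ih =>
    obtain ⟨hm, hmc, hcd, hinj, hBc, hBd⟩ := ih
    have hit : f.toFun^[n+1] = f.toFun ∘ f.toFun^[n] := Function.iterate_succ' f.toFun n
    have hm' : MapsTo (f.toFun^[n+1]) Disk Disk := by
      rw [hit]; exact f.mapsTo.comp hm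
    have hmc' : MapsTo (f.toFun^[n+1]) Circ Circ := by
      rw [hit]; exact fun z hz => f.toFun_circ (hmc hz)
    have hcd' : ContDiffOn ℝ 1 (f.toFun^[n+1]) Disk := by
      rw [hit]; exact f.contDiffOn.comp hcd hm
    have hchain : ∀ z ∈ Disk, fderivWithin ℝ (f.toFun^[n+1]) Disk z =
        (fderivWithin ℝ f.toFun Disk (f.toFun^[n] z)).comp (fderivWithin ℝ (f.toFun^[n]) Disk z) := by
      intro z hz
      rw [hit]
      exact fderivWithin_comp (x := z)
        ((f.contDiffOn.differentiableOn one_ne_zero) _ (hm hz))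
        ((hcd.differentiableOn one_ne_zero) _ hz) hm (uniqueDiffOn_Disk z hz)
    refine ⟨hm', hmc', hcd', ?_, ?_, ?_⟩
    · intro z hz
      rw [hchain z hz]
      exact (f.inj_fderivWithin (hm hz)).comp (hinj z hz)
    · have : (fun z => ∑ k ∈ Finset.range (n+1), A (f.toFun^[k] z))
          = fun z => (∑ k ∈ Finset.range n, A (f.toFun^[k] z)) + A (f.toFun^[n] z) := by
        funext z; rw [Finset.sum_range_succ]
      rw [this]
      exact hBc.add ((hA.1).comp hcd hm)
    · intro z hz w
      have hsum : (fun z => ∑ k ∈ Finset.range (n+1), A (f.toFun^[k] z))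
          = fun z => (∑ k ∈ Finset.range n, A (f.toFun^[k] z)) + A (f.toFun^[n] z) := by
        funext z; rw [Finset.sum_range_succ]
      rw [hsum]
      have hdB : DifferentiableWithinAt ℝ (fun z => ∑ k ∈ Finset.range n, A (f.toFun^[k] z)) Disk z :=
        (hBc.differentiableOn one_ne_zero) z hz
      have hdAg : DifferentiableWithinAt ℝ (fun z => A (f.toFun^[n] z)) Disk z :=
        (((hA.1).comp hcd hm).differentiableOn one_ne_zero) z hz
      rw [fderivWithin_fun_add (uniqueDiffOn_Disk z hz) hdB hdAg]
      have hAchain : fderivWithin ℝ (A ∘ f.toFun^[n]) Disk z =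
          (fderivWithin ℝ A Disk (f.toFun^[n] z)).comp (fderivWithin ℝ (f.toFun^[n]) Disk z) :=
        fderivWithin_comp (x := z) ((hA.1.differentiableOn one_ne_zero) _ (hm hz))
          ((hcd.differentiableOn one_ne_zero) _ hz) hm (uniqueDiffOn_Disk z hz)
      have hAg : fderivWithin ℝ (fun z => A (f.toFun^[n] z)) Disk z =
          (fderivWithin ℝ A Disk (f.toFun^[n] z)).comp (fderivWithin ℝ (f.toFun^[n]) Disk z) := hAchain
      rw [ContinuousLinearMap.add_apply, hBd z hz w, hAg, ContinuousLinearMap.comp_apply,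
        hA.2 _ (hm hz), hchain z hz, ContinuousLinearMap.comp_apply, hit]
      simp only [Function.comp_apply]
      ring

lemma isCompact_Disk : IsCompact Disk := isCompact_closedBall 0 1
lemma measurableSet_Circ : MeasurableSet Circ := (isClosed_sphere).measurableSet

-- for a measure concentrated on Circ, continuous-on-Disk functions are integrable
lemma integrable_of_contOn {C : ℂ → ℝ} (hC : ContinuousOn C Disk)
    {μ : Measure ℂ} [IsProbabilityMeasure μ] (hμc : μ Circᶜ = 0) :
    Integrable C μ ∧ AEStronglyMeasurable C μ := by
  have hres : μ.restrict Circ = μ :=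
    Measure.restrict_eq_self_of_ae_mem (mem_ae_iff.2 hμc)
  have haem : AEMeasurable C μ := by
    have := (hC.mono Circ_subset_Disk).aemeasurable measurableSet_Circ (μ := μ)
    rwa [hres] at this
  have hasm : AEStronglyMeasurable C μ := haem.aestronglyMeasurable
  obtain ⟨M, hM⟩ := isCompact_Disk.exists_bound_of_continuousOn hC
  have hbd : ∀ᵐ z ∂μ, ‖C z‖ ≤ M := by
    filter_upwards [mem_ae_iff.2 hμc] with z hz
    exact hM z (Circ_subset_Disk hz)
  exact ⟨⟨hasm, HasFiniteIntegral.of_bounded hbd⟩, hasm⟩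

lemma map_iterate {g : ℂ → ℂ} {μ : Measure ℂ} [IsProbabilityMeasure μ]
    (hmap : Measure.map g μ = μ) (n : ℕ) :
    AEMeasurable (g^[n]) μ ∧ Measure.map (g^[n]) μ = μ := by
  have haem : AEMeasurable g μ := by
    by_contra h
    have := Measure.map_of_not_aemeasurable h
    rw [hmap] at this
    exact (IsProbabilityMeasure.ne_zero μ) this
  induction n with
  | zero => simp [Function.iterate_zero]; exact aemeasurable_id
  | succ n ih =>
    obtain ⟨ih1, ih2⟩ := ih
    have hit : g^[n+1] = g ∘ g^[n] := Function.iterate_succ' g n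
    have haem' : AEMeasurable g (Measure.map (g^[n]) μ) := by rw [ih2]; exact haem
    constructor
    · rw [hit]; exact haem'.comp_aemeasurable ih1
    · rw [hit, ← AEMeasurable.map_map_of_aemeasurable haem' ih1, ih2, hmap]

/-- The integral of an action function over the circle does not depend
on the choice of the invariant probability measure. -/
theorem action_integral_indep_measure (f : SympDiff) (A : ℂ → ℝ) (hA : IsAction f A)
    (μ ν : Measure ℂ) (hμ : IsInvariantCircleMeasure f μ)
    (hν : IsInvariantCircleMeasure f ν) :
    ∫ z, A z ∂μ = ∫ z, A z ∂ν := by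
  obtain ⟨hμp, hμc, hμm⟩ := hμ
  obtain ⟨hνp, hνc, hνm⟩ := hν
  haveI := hμp; haveI := hνp
  set Bn : ℕ → ℂ → ℝ := fun n z => ∑ k ∈ Finset.range n, A (f.toFun^[k] z) with hBn
  -- continuity of iterates' summands on Disk
  have hAk : ∀ k : ℕ, ContinuousOn (fun z => A (f.toFun^[k] z)) Disk := by
    intro k
    obtain ⟨hm, _, hcd, _, _, _⟩ := iter_pack f A hA k
    exact (hA.1.continuousOn).comp hcd.continuousOn hm
  have hBnc : ∀ n : ℕ, ContinuousOn (Bn n) Disk := fun n =>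
    ((iter_pack f A hA n).2.2.2.2.1).continuousOn
  -- oscillation bound
  have hosc : ∀ n : ℕ, ∀ z ∈ Circ, ∀ w ∈ Circ, |Bn n z - Bn n w| ≤ 1 := by
    intro n z hz w hw
    obtain ⟨hm, hmc, hcd, hinj, hBc, hBd⟩ := iter_pack f A hA n
    exact osc_le (f.toFun^[n]) (Bn n) hcd hmc hinj hBc hBd hz hw
  -- the integrals of Bn
  have hint : ∀ (σ : Measure ℂ), IsProbabilityMeasure σ → σ Circᶜ = 0 →
      Measure.map f.toFun σ = σ → ∀ n : ℕ,
      ∫ z, Bn n z ∂σ = n * ∫ z, A z ∂σ := by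
    intro σ hσp hσc hσm n
    haveI := hσp
    have h1 : ∫ z, Bn n z ∂σ = ∑ k ∈ Finset.range n, ∫ z, A (f.toFun^[k] z) ∂σ := by
      rw [hBn]
      exact integral_finset_sum _ (fun k _ => (integrable_of_contOn (hAk k) hσc).1)
    have h2 : ∀ k : ℕ, ∫ z, A (f.toFun^[k] z) ∂σ = ∫ z, A z ∂σ := by
      intro k
      obtain ⟨haem, hmap⟩ := map_iterate hσm k
      have hAm : AEStronglyMeasurable A (Measure.map (f.toFun^[k]) σ) := by
        rw [hmap]
        exact (integrable_of_contOn (hA.1.continuousOn) hσc).2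
      have := integral_map haem hAm
      rw [hmap] at this
      rw [← this]
    rw [h1]
    simp [h2]
  -- bound the difference for each n
  have hone : (1:ℂ) ∈ Circ := by simp [Circ, mem_sphere, Complex.dist_eq]
  have hbound : ∀ (σ : Measure ℂ), IsProbabilityMeasure σ → σ Circᶜ = 0 →
      ∀ n : ℕ, |∫ z, Bn n z ∂σ - Bn n 1| ≤ 1 := by
    intro σ hσp hσc n
    haveI := hσp
    have hi : Integrable (Bn n) σ := (integrable_of_contOn (hBnc n) hσc).1
    have heq : ∫ z, Bn n z ∂σ - Bn n 1 = ∫ z, (Bn n z - Bn n 1) ∂σ := by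
      rw [integral_sub hi (integrable_const _), integral_const]
      simp
    rw [heq, ← Real.norm_eq_abs]
    have hb : ∀ᵐ z ∂σ, ‖Bn n z - Bn n 1‖ ≤ 1 := by
      filter_upwards [mem_ae_iff.2 hσc] with z hz
      rw [Real.norm_eq_abs]
      exact hosc n z hz 1 hone
    have := norm_integral_le_of_norm_le_const hb
    simpa using this
  -- conclude
  set D := ∫ z, A z ∂μ - ∫ z, A z ∂ν with hD
  have hDn : ∀ n : ℕ, (n : ℝ) * |D| ≤ 2 := by
    intro n
    have h1 := hbound μ hμp hμc n
    have h2 := hbound ν hνp hνc n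
    have h3 : (n : ℝ) * D = (∫ z, Bn n z ∂μ - Bn n 1) - (∫ z, Bn n z ∂ν - Bn n 1) := by
      rw [hD, hint μ hμp hμc hμm n, hint ν hνp hνc hνm n]
      ring
    have : |(n : ℝ) * D| ≤ 2 := by
      rw [h3]
      calc |(∫ z, Bn n z ∂μ - Bn n 1) - (∫ z, Bn n z ∂ν - Bn n 1)|
          ≤ |∫ z, Bn n z ∂μ - Bn n 1| + |∫ z, Bn n z ∂ν - Bn n 1| := abs_sub _ _
        _ ≤ 2 := by linarith
    rwa [abs_mul, abs_of_nonneg (Nat.cast_nonneg n)] at this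
  have hD0 : D = 0 := by
    by_contra h
    have habs : 0 < |D| := abs_pos.2 h
    obtain ⟨n, hn⟩ := exists_nat_gt (2 / |D|)
    have := hDn n
    have h4 : (n : ℝ) * |D| > 2 := by
      rw [gt_iff_lt, ← div_lt_iff₀ habs] at *
      linarith [hn]
    linarith
  linarith [hD0, hD]
end
end

section
/- Let 0 < ε ≤ 1/2 and let f : D → ℝ² be a map satisfying ‖(f(y) − f(x)) − (y − x)‖ ≤ ε‖y − x‖ for all x, y ∈ D (this holds in particular when f is C¹ on D with ‖Df_z − Id‖ ≤ ε for all z ∈ D). Then for all x ≠ y in D one has f(x) ≠ f(y) and |⟨(f(y) − f(x))/‖f(y) − f(x)‖, (y − x)/‖y − x‖⟩ − 1| ≤ 2ε. -/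
open MeasureTheory Metric Set Filter Topology
open scoped Real

noncomputable section

set_option maxHeartbeats 1600000 in
/-- If `f` moves differences by at most `ε ≤ 1/2` relatively, then the
cosine of the angle between `f(y) - f(x)` and `y - x` is `2ε`-close to `1`. -/
theorem cos_angle_close_C1 (ε : ℝ) (hε0 : 0 < ε) (hε : ε ≤ 1 / 2) (f : ℂ → ℂ)
    (hf : ∀ x ∈ Disk, ∀ y ∈ Disk, ‖(f y - f x) - (y - x)‖ ≤ ε * ‖y - x‖) :
    ∀ x ∈ Disk, ∀ y ∈ Disk, x ≠ y →
      f x ≠ f y ∧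
      |(((f y - f x) / (‖f y - f x‖ : ℂ)) *
          (starRingEnd ℂ) ((y - x) / (‖y - x‖ : ℂ))).re - 1| ≤ 2 * ε := by
  intro x hx y hy hxy
  set u : ℂ := y - x with hu_def
  set v : ℂ := f y - f x with hv_def
  have hu0 : u ≠ 0 := sub_ne_zero.mpr (Ne.symm hxy)
  have h : ‖v - u‖ ≤ ε * ‖u‖ := hf x hx y hy
  set nu : ℝ := ‖u‖ with hnu_def
  set nv : ℝ := ‖v‖ with hnv_def
  have hnu : 0 < nu := norm_pos_iff.mpr hu0
  have hlow : (1 - ε) * nu ≤ nv := by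
    have habs : |nv - nu| ≤ ‖v - u‖ := abs_norm_sub_norm_le v u
    rw [abs_le] at habs
    nlinarith [habs.1, habs.2]
  have hnv : 0 < nv := by nlinarith
  have hv0 : v ≠ 0 := norm_pos_iff.mp hnv
  refine ⟨fun hfe => hv0 (by rw [hv_def, hfe, sub_self]), ?_⟩
  have key : (v / (nv:ℂ)) * (starRingEnd ℂ) (u / (nu:ℂ)) =
      (v * (starRingEnd ℂ) u) / (((nv*nu : ℝ)):ℂ) := by
    rw [map_div₀, Complex.conj_ofReal]
    push_cast
    field_simp
  rw [key, Complex.div_ofReal_re]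
  set p : ℝ := (v * (starRingEnd ℂ) u).re with hp_def
  clear_value p nv nu v u
  have hp : p = v.re * u.re + v.im * u.im := by
    simp [hp_def, Complex.mul_re, Complex.conj_re, Complex.conj_im]
  have hnu2 : nu^2 = u.re^2 + u.im^2 := by
    rw [hnu_def, Complex.sq_norm, Complex.normSq_apply]; ring
  have hnv2 : nv^2 = v.re^2 + v.im^2 := by
    rw [hnv_def, Complex.sq_norm, Complex.normSq_apply]; ring
  have hsub2 : ‖v - u‖^2 = (v.re - u.re)^2 + (v.im - u.im)^2 := by
    rw [Complex.sq_norm, Complex.normSq_apply]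
    simp [Complex.sub_re, Complex.sub_im]
    ring
  have hsq : ‖v - u‖^2 ≤ ε^2 * nu^2 := by
    have h0 : (0:ℝ) ≤ ‖v - u‖ := norm_nonneg _
    nlinarith
  have h2p : nv^2 + nu^2 - ε^2 * nu^2 ≤ 2 * p := by
    rw [hsub2] at hsq; nlinarith [hp, hnu2, hnv2]
  have hCS : p ≤ nv * nu := by
    nlinarith [sq_nonneg (v.re * u.im - v.im * u.re), hp, hnu2, hnv2,
      mul_pos hnv hnu]
  have hd : 0 < nv * nu := mul_pos hnv hnu
  rw [abs_le]
  constructor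
  · rw [le_sub_iff_add_le, le_div_iff₀ hd]
    have hA : nv * nu - p ≤ ε^2 * nu^2 / 2 := by nlinarith [sq_nonneg (nv - nu)]
    have hB : ε * nu^2 ≤ 2 * ε * (nv * nu) := by
      have h1 : (1 - ε) * nu * nu ≤ nv * nu := mul_le_mul_of_nonneg_right hlow hnu.le
      nlinarith [mul_nonneg (by linarith : (0:ℝ) ≤ 1 - 2*ε)
        (mul_nonneg hε0.le (sq_nonneg nu)), mul_nonneg hε0.le (sub_nonneg.mpr h1)]
    have hC : ε^2 * nu^2 / 2 ≤ ε * nu^2 := by nlinarith [sq_nonneg nu]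
    linarith
  · rw [sub_le_iff_le_add, div_le_iff₀ hd]
    nlinarith
end
end

section
/- Let 0 < ε ≤ 1/2 and let f : D → ℝ² ≅ ℂ be a map satisfying ‖(f(y) − f(x)) − (y − x)‖ ≤ ε‖y − x‖ for all x, y ∈ D (so f(x) ≠ f(y) whenever x ≠ y). Let A : {(x,y) ∈ D×D : x ≠ y} → ℝ be a continuous function such that exp(2πi·A(x,y)) = (f(y)−f(x))·conj(y−x) / (‖f(y)−f(x)‖·‖y−x‖) for all x ≠ y, and assume |A(x₀,y₀)| < 1/2 for at least one pair x₀ ≠ y₀ in D. Then |A(x,y)| ≤ √(2ε)/π for all x ≠ y in D. -/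
open MeasureTheory Metric Set Filter Topology
open scoped Real

set_option maxHeartbeats 1000000

noncomputable section

private lemma nsq_eq (z : ℂ) : ‖z‖ ^ 2 = z.re ^ 2 + z.im ^ 2 := by
  rw [Complex.sq_norm, Complex.normSq_apply]; ring

private lemma exp_norm_sq (t : ℝ) :
    ‖Complex.exp (2 * Real.pi * Complex.I * (t : ℂ)) - 1‖ ^ 2
      = 4 * Real.sin (Real.pi * t) ^ 2 := by
  have h : (2 * Real.pi * Complex.I * (t : ℂ)) = ((2 * Real.pi * t : ℝ) : ℂ) * Complex.I := by
    push_cast; ring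
  rw [h, Complex.exp_mul_I, ← Complex.ofReal_cos, ← Complex.ofReal_sin]
  have h2 : ((Real.cos (2*Real.pi*t) : ℂ) + (Real.sin (2*Real.pi*t) : ℂ) * Complex.I - 1)
      = ((Real.cos (2*Real.pi*t) - 1 : ℝ) : ℂ) + ((Real.sin (2*Real.pi*t) : ℝ) : ℂ) * Complex.I := by
    push_cast; ring
  rw [h2, Complex.sq_norm, Complex.normSq_add_mul_I]
  have hθ : Real.cos (2*Real.pi*t) = 1 - 2*Real.sin (Real.pi*t)^2 := by
    rw [show 2*Real.pi*t = 2*(Real.pi*t) by ring, Real.cos_two_mul]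
    nlinarith [Real.sin_sq_add_cos_sq (Real.pi*t)]
  nlinarith [Real.sin_sq_add_cos_sq (2*Real.pi*t), hθ]

private lemma key_core (ε : ℝ) (hε0 : 0 < ε) (hε : ε ≤ 1 / 2) (a b : ℂ) (hb : b ≠ 0)
    (hab : ‖a - b‖ ≤ ε * ‖b‖) (t : ℝ)
    (heq : Complex.exp (2 * Real.pi * Complex.I * (t : ℂ)) =
      (a * (starRingEnd ℂ) b) / ((‖a‖ : ℂ) * (‖b‖ : ℂ))) :
    Real.sin (Real.pi * t) ^ 2 ≤ ε ^ 2 / 2 := by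
  have hbn : 0 < ‖b‖ := norm_pos_iff.mpr hb
  have han : (1 - ε) * ‖b‖ ≤ ‖a‖ := by
    have h1 := abs_norm_sub_norm_le a b
    have h2 := abs_le.mp h1
    linarith [h2.1]
  have ha : 0 < ‖a‖ := by nlinarith
  set P : ℂ := a * (starRingEnd ℂ) b with hP_def
  have hr0 : 0 < ‖a‖ * ‖b‖ := mul_pos ha hbn
  have hrc : ((‖a‖ : ℂ) * (‖b‖ : ℂ)) = ((‖a‖ * ‖b‖ : ℝ) : ℂ) := (Complex.ofReal_mul _ _).symm
  rw [hrc] at heq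
  have hrne : ((‖a‖ * ‖b‖ : ℝ) : ℂ) ≠ 0 := by exact_mod_cast hr0.ne'
  have hmul : Complex.exp (2 * Real.pi * Complex.I * (t : ℂ)) * ((‖a‖ * ‖b‖ : ℝ) : ℂ) = P :=
    (eq_div_iff hrne).mp heq
  have hsub : (Complex.exp (2 * Real.pi * Complex.I * (t : ℂ)) - 1) * ((‖a‖ * ‖b‖ : ℝ) : ℂ)
      = P - ((‖a‖ * ‖b‖ : ℝ) : ℂ) := by rw [sub_mul, hmul, one_mul]
  have hnorm : ‖Complex.exp (2 * Real.pi * Complex.I * (t : ℂ)) - 1‖ * (‖a‖ * ‖b‖)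
      = ‖P - ((‖a‖ * ‖b‖ : ℝ) : ℂ)‖ := by
    have h := congrArg norm hsub
    rwa [norm_mul, Complex.norm_real, Real.norm_of_nonneg hr0.le] at h
  have hE1 : 4 * Real.sin (Real.pi * t) ^ 2 * (‖a‖ * ‖b‖) ^ 2
      = (P.re - ‖a‖ * ‖b‖) ^ 2 + P.im ^ 2 := by
    have h := congrArg (· ^ 2) hnorm
    simp only [mul_pow] at h
    rw [exp_norm_sq] at h
    rw [mul_pow, h, nsq_eq]
    simp [Complex.sub_re, Complex.sub_im]
  have hE2 : P.re ^ 2 + P.im ^ 2 = (‖a‖ * ‖b‖) ^ 2 := by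
    have h1 : ‖P‖ = ‖a‖ * ‖b‖ := by
      rw [hP_def, norm_mul, RCLike.norm_conj]
    have h2 := nsq_eq P
    rw [h1] at h2
    linarith
  have h4 : P.re = a.re * b.re + a.im * b.im := by
    simp only [hP_def, Complex.mul_re, Complex.conj_re, Complex.conj_im]
    ring
  have hE3 : ‖a - b‖ ^ 2 = ‖a‖ ^ 2 + ‖b‖ ^ 2 - 2 * P.re := by
    have h1 := nsq_eq (a - b)
    have h2 := nsq_eq a
    have h3 := nsq_eq b
    simp only [Complex.sub_re, Complex.sub_im] at h1
    rw [h1, h4, h2, h3]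
    ring
  have hE4 : ‖a - b‖ ^ 2 ≤ ε ^ 2 * ‖b‖ ^ 2 := by
    nlinarith [norm_nonneg (a - b)]
  have hS0 : (0:ℝ) ≤ Real.sin (Real.pi * t) ^ 2 := sq_nonneg _
  have e6 : (4 * Real.sin (Real.pi * t) ^ 2 * (‖a‖ * ‖b‖)) * (‖a‖ * ‖b‖)
      = (2 * (‖a‖ * ‖b‖) - 2 * P.re) * (‖a‖ * ‖b‖) := by linear_combination hE1 + hE2
  have e7 : 4 * Real.sin (Real.pi * t) ^ 2 * (‖a‖ * ‖b‖) = 2 * (‖a‖ * ‖b‖) - 2 * P.re :=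
    mul_right_cancel₀ hr0.ne' e6
  have e8 : 4 * Real.sin (Real.pi * t) ^ 2 * (‖a‖ * ‖b‖) ≤ ε ^ 2 * ‖b‖ ^ 2 := by
    nlinarith [sq_nonneg (‖a‖ - ‖b‖)]
  have e9 : ‖b‖ / 2 ≤ ‖a‖ := by nlinarith
  have e10 : (2 * Real.sin (Real.pi * t) ^ 2) * ‖b‖ ^ 2 ≤ (ε ^ 2) * ‖b‖ ^ 2 := by
    nlinarith [mul_nonneg (mul_nonneg hS0 (sub_nonneg.mpr e9)) hbn.le]
  have e11 : 2 * Real.sin (Real.pi * t) ^ 2 ≤ ε ^ 2 :=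
    le_of_mul_le_mul_right e10 (by positivity)
  linarith

/-- If `f` moves differences by at most `ε ≤ 1/2` relatively, then any
continuous determination `A` of the angle function which is smaller than `1/2` at one
pair satisfies `|A| ≤ √(2ε)/π` everywhere. -/
theorem angle_small_C1 (ε : ℝ) (hε0 : 0 < ε) (hε : ε ≤ 1 / 2) (f : ℂ → ℂ)
    (hf : ∀ x ∈ Disk, ∀ y ∈ Disk, ‖(f y - f x) - (y - x)‖ ≤ ε * ‖y - x‖)
    (A : ℂ × ℂ → ℝ)
    (hAcont : ContinuousOn A {p : ℂ × ℂ | p.1 ∈ Disk ∧ p.2 ∈ Disk ∧ p.1 ≠ p.2})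
    (hAang : ∀ x ∈ Disk, ∀ y ∈ Disk, x ≠ y →
      Complex.exp (2 * Real.pi * Complex.I * (A (x, y) : ℂ)) =
        ((f y - f x) * (starRingEnd ℂ) (y - x)) /
          ((‖f y - f x‖ : ℂ) * (‖y - x‖ : ℂ)))
    (x₀ y₀ : ℂ) (hx₀ : x₀ ∈ Disk) (hy₀ : y₀ ∈ Disk) (hne₀ : x₀ ≠ y₀)
    (hsmall : |A (x₀, y₀)| < 1 / 2) :
    ∀ x ∈ Disk, ∀ y ∈ Disk, x ≠ y →
      |A (x, y)| ≤ Real.sqrt (2 * ε) / Real.pi := by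
  have hDisk : ∀ z : ℂ, z ∈ Disk ↔ ‖z‖ ≤ 1 := fun z => mem_closedBall_zero_iff
  have key : ∀ p : ℂ × ℂ, p.1 ∈ Disk → p.2 ∈ Disk → p.1 ≠ p.2 →
      Real.sin (Real.pi * A p) ^ 2 ≤ ε ^ 2 / 2 := by
    rintro ⟨x, y⟩ hx hy hxy
    exact key_core ε hε0 hε (f y - f x) (y - x) (sub_ne_zero.mpr (Ne.symm hxy))
      (hf x hx y hy) (A (x, y)) (hAang x hx y hy hxy)
  have hhalf : ∀ p : ℂ × ℂ, p.1 ∈ Disk → p.2 ∈ Disk → p.1 ≠ p.2 →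
      A p ≠ 1/2 ∧ A p ≠ -(1/2) := by
    intro p h1 h2 h3
    have hk := key p h1 h2 h3
    have hb : ε ^ 2 / 2 < 1 := by nlinarith
    constructor <;> intro hEq <;> rw [hEq] at hk
    · rw [show Real.pi * (1/2) = Real.pi/2 by ring, Real.sin_pi_div_two] at hk
      norm_num at hk; linarith
    · rw [show Real.pi * (-(1/2)) = -(Real.pi/2) by ring, Real.sin_neg, Real.sin_pi_div_two] at hk
      norm_num at hk; linarith
  have hprop : ∀ γ : ℝ → ℂ × ℂ, ContinuousOn γ (Icc 0 1) →
      (∀ t ∈ Icc (0:ℝ) 1, (γ t).1 ∈ Disk ∧ (γ t).2 ∈ Disk ∧ (γ t).1 ≠ (γ t).2) →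
      |A (γ 0)| < 1/2 → |A (γ 1)| < 1/2 := by
    intro γ hγc hγm h0
    have hmap : MapsTo γ (Icc 0 1) {p : ℂ × ℂ | p.1 ∈ Disk ∧ p.2 ∈ Disk ∧ p.1 ≠ p.2} :=
      fun t ht => hγm t ht
    have hc : ContinuousOn (fun t => A (γ t)) (Icc 0 1) := hAcont.comp hγc hmap
    by_contra hcon
    push_neg at hcon
    have h0' := abs_lt.mp h0
    have h1mem : (1:ℝ) ∈ Icc (0:ℝ) 1 := by norm_num
    have hne1 := hhalf (γ 1) (hγm 1 h1mem).1 (hγm 1 h1mem).2.1 (hγm 1 h1mem).2.2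
    rcases lt_or_ge (A (γ 1)) 0 with hneg | hpos
    · have hle : A (γ 1) ≤ -(1/2) := by
        have := abs_of_neg hneg; linarith [hcon]
      have hsub := intermediate_value_Icc' (by norm_num : (0:ℝ) ≤ 1) hc
      have hmem : -(1/2) ∈ Icc ((fun t => A (γ t)) 1) ((fun t => A (γ t)) 0) :=
        ⟨hle, by linarith [h0'.1]⟩
      obtain ⟨t, ht, hAt⟩ := hsub hmem
      exact ((hhalf (γ t) (hγm t ht).1 (hγm t ht).2.1 (hγm t ht).2.2).2 hAt).elim
    · have hle : 1/2 ≤ A (γ 1) := by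
        have := abs_of_nonneg hpos; linarith [hcon]
      have hsub := intermediate_value_Icc (by norm_num : (0:ℝ) ≤ 1) hc
      have hmem : 1/2 ∈ Icc ((fun t => A (γ t)) 0) ((fun t => A (γ t)) 1) :=
        ⟨by linarith [h0'.2], hle⟩
      obtain ⟨t, ht, hAt⟩ := hsub hmem
      exact ((hhalf (γ t) (hγm t ht).1 (hγm t ht).2.1 (hγm t ht).2.2).1 hAt).elim
  have hseg_norm : ∀ (p q : ℂ) (t : ℝ), t ∈ Icc (0:ℝ) 1 → ‖p‖ ≤ 1 → ‖q‖ ≤ 1 →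
      ‖(1 - (t:ℂ)) * p + (t:ℂ) * q‖ ≤ 1 := by
    intro p q t ht hp hq
    obtain ⟨ht0, ht1⟩ := ht
    have e1 : ((1:ℂ) - (t:ℂ)) = ((1 - t : ℝ) : ℂ) := by push_cast; ring
    calc ‖(1 - (t:ℂ)) * p + (t:ℂ) * q‖ ≤ ‖(1 - (t:ℂ)) * p‖ + ‖(t:ℂ) * q‖ := norm_add_le _ _
      _ = (1 - t) * ‖p‖ + t * ‖q‖ := by
          rw [norm_mul, norm_mul, e1, Complex.norm_real, Complex.norm_real,
            Real.norm_of_nonneg (by linarith), Real.norm_of_nonneg ht0]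
      _ ≤ (1 - t) * 1 + t * 1 := by
          gcongr <;> linarith
      _ = 1 := by ring
  have hseg : ∀ p₁ p₂ q₁ q₂ : ℂ, ‖p₁‖ ≤ 1 → ‖p₂‖ ≤ 1 → ‖q₁‖ ≤ 1 → ‖q₂‖ ≤ 1 →
      (∀ t ∈ Icc (0:ℝ) 1, (1 - (t:ℂ)) * (p₁ - p₂) + (t:ℂ) * (q₁ - q₂) ≠ 0) →
      |A (p₁, p₂)| < 1/2 → |A (q₁, q₂)| < 1/2 := by
    intro p₁ p₂ q₁ q₂ hp₁ hp₂ hq₁ hq₂ hne h0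
    set γ : ℝ → ℂ × ℂ :=
      fun t => ((1 - (t:ℂ)) * p₁ + (t:ℂ) * q₁, (1 - (t:ℂ)) * p₂ + (t:ℂ) * q₂) with hγ
    have e0 : γ 0 = (p₁, p₂) := by simp [hγ]
    have e1 : γ 1 = (q₁, q₂) := by simp [hγ]
    have hcont : ContinuousOn γ (Icc 0 1) := by
      apply Continuous.continuousOn
      rw [hγ]
      fun_prop
    have hres := hprop γ hcont ?_ (by rwa [e0])
    · rwa [e1] at hres
    · intro t ht
      refine ⟨(hDisk _).mpr (hseg_norm p₁ q₁ t ht hp₁ hq₁),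
        (hDisk _).mpr (hseg_norm p₂ q₂ t ht hp₂ hq₂), ?_⟩
      intro hEq2
      apply hne t ht
      simp only [hγ] at hEq2
      have hrw : (1 - (t:ℂ)) * (p₁ - p₂) + (t:ℂ) * (q₁ - q₂)
          = ((1 - (t:ℂ)) * p₁ + (t:ℂ) * q₁) - ((1 - (t:ℂ)) * p₂ + (t:ℂ) * q₂) := by ring
      rw [hrw]
      exact sub_eq_zero_of_eq hEq2
  -- centered pair segment
  have hcseg : ∀ w₁ w₂ : ℂ, ‖w₁‖ ≤ 1 → ‖w₂‖ ≤ 1 →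
      (∀ t ∈ Icc (0:ℝ) 1, (1 - (t:ℂ)) * w₁ + (t:ℂ) * w₂ ≠ 0) →
      |A (w₁, -w₁)| < 1/2 → |A (w₂, -w₂)| < 1/2 := by
    intro w₁ w₂ h1 h2 hne h0
    refine hseg w₁ (-w₁) w₂ (-w₂) h1 (by rwa [norm_neg]) h2 (by rwa [norm_neg]) ?_ h0
    intro t ht hzero
    apply hne t ht
    have hrw : (1 - (t:ℂ)) * w₁ + (t:ℂ) * w₂
        = (2:ℂ)⁻¹ * ((1 - (t:ℂ)) * (w₁ - -w₁) + (t:ℂ) * (w₂ - -w₂)) := by ring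
    rw [hrw, hzero, mul_zero]
  intro x hx y hy hxy
  have hx₀n : ‖x₀‖ ≤ 1 := (hDisk _).mp hx₀
  have hy₀n : ‖y₀‖ ≤ 1 := (hDisk _).mp hy₀
  have hxn : ‖x‖ ≤ 1 := (hDisk _).mp hx
  have hyn : ‖y‖ ≤ 1 := (hDisk _).mp hy
  set c₀ : ℂ := (x₀ - y₀) / 8 with hc₀_def
  set c : ℂ := (x - y) / 8 with hc_def
  have hc₀ne : c₀ ≠ 0 := div_ne_zero (sub_ne_zero.mpr hne₀) (by norm_num)
  have hcne : c ≠ 0 := div_ne_zero (sub_ne_zero.mpr hxy) (by norm_num)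
  have hc₀n : ‖c₀‖ ≤ 1 := by
    rw [hc₀_def, norm_div]
    have := norm_sub_le x₀ y₀
    simp only [Complex.norm_ofNat]
    linarith [norm_sub_le x₀ y₀]
  have hcn : ‖c‖ ≤ 1 := by
    rw [hc_def, norm_div]
    simp only [Complex.norm_ofNat]
    linarith [norm_sub_le x y]
  -- step 1 : (x₀, y₀) → (c₀, -c₀)
  have step1 : |A (c₀, -c₀)| < 1/2 := by
    refine hseg x₀ y₀ c₀ (-c₀) hx₀n hy₀n hc₀n (by rwa [norm_neg]) ?_ hsmall
    intro t ht hzero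
    obtain ⟨ht0, ht1⟩ := ht
    have hrw : (1 - (t:ℂ)) * (x₀ - y₀) + (t:ℂ) * (c₀ - -c₀)
        = ((1 - (3/4) * t : ℝ) : ℂ) * (x₀ - y₀) := by
      rw [hc₀_def]; push_cast; ring
    rw [hrw] at hzero
    have hco : ((1 - (3/4) * t : ℝ) : ℂ) ≠ 0 := by
      have : (1:ℝ) - (3/4) * t ≠ 0 := by intro h; linarith
      exact_mod_cast this
    exact (mul_ne_zero hco (sub_ne_zero.mpr hne₀)) hzero
  -- step 2 : (c₀, -c₀) → (c, -c)
  have step2 : |A (c, -c)| < 1/2 := by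
    by_cases hcase : ∀ t ∈ Icc (0:ℝ) 1, (1 - (t:ℂ)) * c₀ + (t:ℂ) * c ≠ 0
    · exact hcseg c₀ c hc₀n hcn hcase step1
    · push_neg at hcase
      obtain ⟨t₀, ht₀I, ht₀⟩ := hcase
      obtain ⟨ht₀l, ht₀r⟩ := ht₀I
      have ht₀ne0 : t₀ ≠ 0 := by
        intro h; rw [h] at ht₀; simp at ht₀; exact hc₀ne ht₀
      have ht₀ne1 : t₀ ≠ 1 := by
        intro h; rw [h] at ht₀; simp at ht₀; exact hcne ht₀
      have ht₀pos : 0 < t₀ := lt_of_le_of_ne ht₀l (Ne.symm ht₀ne0)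
      have ht₀lt : t₀ < 1 := lt_of_le_of_ne ht₀r ht₀ne1
      set s : ℝ := (1 - t₀) / t₀ with hs_def
      have hs_pos : 0 < s := div_pos (by linarith) ht₀pos
      have ht₀c : (t₀ : ℂ) ≠ 0 := by exact_mod_cast ht₀ne0
      have hcc : c = -((s : ℝ) : ℂ) * c₀ := by
        rw [hs_def]
        push_cast
        field_simp
        linear_combination ht₀
      -- first : c₀ → I * c₀
      have stepA : |A (Complex.I * c₀, -(Complex.I * c₀))| < 1/2 := by
        refine hcseg c₀ (Complex.I * c₀) hc₀n (by rw [norm_mul, Complex.norm_I, one_mul]; exact hc₀n) ?_ step1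
        intro t ht hzero
        have hrw : (1 - (t:ℂ)) * c₀ + (t:ℂ) * (Complex.I * c₀)
            = ((1 - (t:ℂ)) + (t:ℂ) * Complex.I) * c₀ := by ring
        rw [hrw] at hzero
        rcases mul_eq_zero.mp hzero with h | h
        · have hre := congrArg Complex.re h
          have him := congrArg Complex.im h
          simp at hre him
          rw [him] at hre
          norm_num at hre
        · exact hc₀ne h
      -- second : I * c₀ → c
      refine hcseg (Complex.I * c₀) c (by rw [norm_mul, Complex.norm_I, one_mul]; exact hc₀n) hcn ?_ stepA
      intro t ht hzero
      obtain ⟨ht0, ht1⟩ := ht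
      rw [hcc] at hzero
      have hrw : (1 - (t:ℂ)) * (Complex.I * c₀) + (t:ℂ) * (-((s : ℝ) : ℂ) * c₀)
          = ((1 - (t:ℂ)) * Complex.I - ((t * s : ℝ) : ℂ)) * c₀ := by push_cast; ring
      rw [hrw] at hzero
      rcases mul_eq_zero.mp hzero with h | h
      · have hre := congrArg Complex.re h
        have him := congrArg Complex.im h
        simp at hre him
        rcases hre with h' | h'
        · rw [h'] at him; norm_num at him
        · exact hs_pos.ne' h'
      · exact hc₀ne h
  -- step 3 : (c, -c) → (x, y)
  have step3 : |A (x, y)| < 1/2 := by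
    refine hseg c (-c) x y hcn (by rwa [norm_neg]) hxn hyn ?_ step2
    intro t ht hzero
    obtain ⟨ht0, ht1⟩ := ht
    have hrw : (1 - (t:ℂ)) * (c - -c) + (t:ℂ) * (x - y)
        = (((1 - t) / 4 + t : ℝ) : ℂ) * (x - y) := by
      rw [hc_def]; push_cast; ring
    rw [hrw] at hzero
    have hco : (((1 - t) / 4 + t : ℝ) : ℂ) ≠ 0 := by
      have : (1 - t) / 4 + t ≠ 0 := by intro h; linarith
      exact_mod_cast this
    exact (mul_ne_zero hco (sub_ne_zero.mpr hxy)) hzero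
  -- conclude with Jordan's inequality
  set α : ℝ := A (x, y) with hα
  have hsinsq : Real.sin (Real.pi * α) ^ 2 ≤ ε ^ 2 / 2 := key (x, y) hx hy hxy
  have hαlt := abs_lt.mp step3
  have habs_sin : Real.sin (Real.pi * |α|) ^ 2 = Real.sin (Real.pi * α) ^ 2 := by
    rcases abs_cases α with ⟨h1, _⟩ | ⟨h1, _⟩
    · rw [h1]
    · rw [h1, show Real.pi * -α = -(Real.pi * α) by ring, Real.sin_neg]; ring
  have hj : 2 / Real.pi * (Real.pi * |α|) ≤ Real.sin (Real.pi * |α|) := by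
    apply Real.mul_le_sin (by positivity)
    nlinarith [Real.pi_pos, abs_nonneg α]
  have hj' : 2 * |α| ≤ Real.sin (Real.pi * |α|) := by
    have e : 2 / Real.pi * (Real.pi * |α|) = 2 * |α| := by
      field_simp
    rwa [e] at hj
  have hsq : α ^ 2 ≤ ε ^ 2 / 8 := by
    have hpow := pow_le_pow_left₀ (by positivity : (0:ℝ) ≤ 2 * |α|) hj' 2
    rw [habs_sin] at hpow
    nlinarith [sq_abs α]
  have h1 : (|α| * Real.pi) ^ 2 ≤ 2 * ε := by
    have hπ4 := Real.pi_le_four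
    have hπ0 := Real.pi_pos
    have h16 : 0 ≤ 16 - Real.pi ^ 2 := by nlinarith
    nlinarith [sq_abs α, mul_nonneg (sq_nonneg α) h16]
  have h2 : |α| * Real.pi ≤ Real.sqrt (2 * ε) := by
    calc |α| * Real.pi = Real.sqrt ((|α| * Real.pi) ^ 2) := by
          rw [Real.sqrt_sq (by positivity)]
      _ ≤ Real.sqrt (2 * ε) := Real.sqrt_le_sqrt h1
  exact (le_div_iff₀ Real.pi_pos).mpr h2
end
end

section
/- Let 0 < ε < 1/16 and let f : D → ℝ² ≅ ℂ be a continuous injective map with ‖f(z) − z‖ ≤ ε for all z ∈ D. Let A : {(x,y) ∈ D×D : x ≠ y} → ℝ be a continuous function such that exp(2πi·A(x,y)) = (f(y)−f(x))·conj(y−x) / (‖f(y)−f(x)‖·‖y−x‖) for all x ≠ y. Then there exists a unique integer k ∈ ℤ such that |A(x,y) − k| ≤ 2·ε^{1/4}/π (< 1/2) for all x, y ∈ D with ‖x − y‖ ≥ √ε. -/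
open MeasureTheory Metric Set Filter Topology
open scoped Real

noncomputable section

/-! ### Auxiliary lemmas -/

lemma mem_Disk {z : ℂ} : z ∈ Disk ↔ ‖z‖ ≤ 1 := by
  simp [Disk, Metric.mem_closedBall, Complex.dist_eq, sub_zero]

lemma aux_unit_sub (v w : ℂ) (hv : v ≠ 0) (hw : w ≠ 0) :
    ‖v / ‖v‖ - w / ‖w‖‖ ≤ 2 * ‖v - w‖ / ‖w‖ := by
  have ha : (0:ℝ) < ‖v‖ := norm_pos_iff.2 hv
  have hb : (0:ℝ) < ‖w‖ := norm_pos_iff.2 hw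
  have ha' : ((‖v‖:ℝ) : ℂ) ≠ 0 := by exact_mod_cast ha.ne'
  have hb' : ((‖w‖:ℝ) : ℂ) ≠ 0 := by exact_mod_cast hb.ne'
  have key : v / (‖v‖:ℝ) - w / (‖w‖:ℝ) =
      ((((‖w‖:ℝ) - ‖v‖ : ℝ) : ℂ) * v + (‖v‖:ℝ) * (v - w)) / ((‖v‖:ℝ) * (‖w‖:ℝ)) := by
    rw [div_sub_div _ _ ha' hb']
    congr 1
    push_cast
    ring
  rw [key, norm_div]
  have h1 : ‖((((‖w‖:ℝ) - ‖v‖ : ℝ) : ℂ) * v + ((‖v‖:ℝ):ℂ) * (v - w))‖ ≤ 2 * ‖v‖ * ‖v - w‖ := by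
    calc ‖((((‖w‖:ℝ) - ‖v‖ : ℝ) : ℂ) * v + ((‖v‖:ℝ):ℂ) * (v - w))‖
        ≤ ‖(((‖w‖:ℝ) - ‖v‖ : ℝ) : ℂ) * v‖ + ‖((‖v‖:ℝ) : ℂ) * (v - w)‖ := norm_add_le _ _
      _ = |‖w‖ - ‖v‖| * ‖v‖ + ‖v‖ * ‖v - w‖ := by
          rw [norm_mul, norm_mul, Complex.norm_real, Complex.norm_real, Real.norm_eq_abs,
            Real.norm_eq_abs, abs_of_nonneg ha.le]
      _ ≤ ‖v - w‖ * ‖v‖ + ‖v‖ * ‖v - w‖ := by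
          gcongr
          rw [abs_sub_comm]
          exact abs_norm_sub_norm_le v w
      _ = 2 * ‖v‖ * ‖v - w‖ := by ring
  have h2 : ‖(((‖v‖:ℝ):ℂ) * ((‖w‖:ℝ):ℂ))‖ = ‖v‖ * ‖w‖ := by
    rw [norm_mul, Complex.norm_real, Complex.norm_real, Real.norm_eq_abs, Real.norm_eq_abs,
      abs_of_nonneg ha.le, abs_of_nonneg hb.le]
  rw [h2, div_le_div_iff₀ (by positivity) hb]
  calc ‖_‖ * ‖w‖ ≤ (2 * ‖v‖ * ‖v - w‖) * ‖w‖ := mul_le_mul_of_nonneg_right h1 (norm_nonneg w)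
    _ = 2 * ‖v - w‖ * (‖v‖ * ‖w‖) := by ring

lemma aux_round_close (θ : ℝ) (δ : ℝ)
    (h : ‖Complex.exp (2 * Real.pi * Complex.I * (θ:ℂ)) - 1‖ ≤ δ) :
    |θ - round θ| ≤ δ / 4 := by
  set t : ℝ := θ - round θ with ht_def
  have ht : |t| ≤ 1/2 := abs_sub_round θ
  have hexp : Complex.exp (2 * Real.pi * Complex.I * (θ:ℂ)) =
      Complex.exp (2 * Real.pi * Complex.I * (t:ℂ)) := by
    have hθ : (θ:ℂ) = (t:ℂ) + ((round θ : ℤ) : ℂ) := by push_cast [ht_def]; ring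
    rw [hθ, mul_add, Complex.exp_add]
    rw [show 2 * (Real.pi:ℂ) * Complex.I * ((round θ : ℤ) : ℂ)
        = ((round θ : ℤ) : ℂ) * (2 * Real.pi * Complex.I) by ring]
    rw [Complex.exp_int_mul_two_pi_mul_I, mul_one]
  rw [hexp] at h
  set z := Complex.exp (2 * Real.pi * Complex.I * (t:ℂ)) with hz
  have hre : (z - 1).re = Real.cos (2 * Real.pi * t) - 1 := by
    rw [Complex.sub_re, Complex.one_re, hz,
      show 2 * (Real.pi:ℂ) * Complex.I * (t:ℂ) = ((2 * Real.pi * t : ℝ) : ℂ) * Complex.I by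
        push_cast; ring, Complex.exp_ofReal_mul_I_re]
  have him : (z - 1).im = Real.sin (2 * Real.pi * t) := by
    rw [Complex.sub_im, Complex.one_im, hz,
      show 2 * (Real.pi:ℂ) * Complex.I * (t:ℂ) = ((2 * Real.pi * t : ℝ) : ℂ) * Complex.I by
        push_cast; ring, Complex.exp_ofReal_mul_I_im, sub_zero]
  have hsq : ‖z - 1‖ ^ 2 = (2 * |Real.sin (Real.pi * t)|) ^ 2 := by
    rw [Complex.sq_norm, Complex.normSq_apply, hre, him]
    have h1 : Real.cos (2 * Real.pi * t)
        = Real.cos (Real.pi * t) ^ 2 - Real.sin (Real.pi * t) ^ 2 := by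
      rw [show 2 * Real.pi * t = 2 * (Real.pi * t) by ring, Real.cos_two_mul']
    have h2 := Real.sin_sq_add_cos_sq (2 * Real.pi * t)
    have h3 := Real.sin_sq_add_cos_sq (Real.pi * t)
    have h4 : |Real.sin (Real.pi * t)| ^ 2 = Real.sin (Real.pi * t) ^ 2 := sq_abs _
    nlinarith [h1, h2, h3, h4]
  have hnorm : ‖z - 1‖ = 2 * |Real.sin (Real.pi * t)| := by
    have h1 : (0:ℝ) ≤ ‖z - 1‖ := norm_nonneg _
    have h2 : (0:ℝ) ≤ 2 * |Real.sin (Real.pi * t)| := by positivity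
    nlinarith [hsq]
  have hs : 2 * |t| ≤ |Real.sin (Real.pi * t)| := by
    have hπ := Real.pi_pos
    have h1 : Real.pi * |t| ≤ Real.pi / 2 := by
      nlinarith [abs_nonneg t]
    have h2 : 2 / Real.pi * (Real.pi * |t|) ≤ Real.sin (Real.pi * |t|) :=
      Real.mul_le_sin (by positivity) h1
    have h3 : Real.sin (Real.pi * |t|) = |Real.sin (Real.pi * t)| := by
      rcases abs_cases t with ⟨he, h0⟩ | ⟨he, h0⟩
      · rw [he, abs_of_nonneg]
        exact Real.sin_nonneg_of_nonneg_of_le_pi (by positivity) (by nlinarith)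
      · have hsin : Real.sin (Real.pi * t) ≤ 0 := by
          rw [show Real.pi * t = -(Real.pi * -t) by ring, Real.sin_neg, neg_nonpos]
          exact Real.sin_nonneg_of_nonneg_of_le_pi (by nlinarith) (by nlinarith)
        rw [he, mul_neg, Real.sin_neg, abs_of_nonpos hsin]
    have h4 : 2 / Real.pi * (Real.pi * |t|) = 2 * |t| := by field_simp
    rw [h4, h3] at h2
    exact h2
  rw [hnorm] at h
  linarith [hs]

lemma aux_conj_identity (v w : ℂ) (hv : v ≠ 0) (hw : w ≠ 0) :
    v * (starRingEnd ℂ) w / ((‖v‖:ℂ) * (‖w‖:ℂ)) - 1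
      = (starRingEnd ℂ) (w / ‖w‖) * (v / ‖v‖ - w / ‖w‖) := by
  have ha : (0:ℝ) < ‖v‖ := norm_pos_iff.2 hv
  have hb : (0:ℝ) < ‖w‖ := norm_pos_iff.2 hw
  have ha' : ((‖v‖:ℝ) : ℂ) ≠ 0 := by exact_mod_cast ha.ne'
  have hb' : ((‖w‖:ℝ) : ℂ) ≠ 0 := by exact_mod_cast hb.ne'
  have hcw : (starRingEnd ℂ) w * w = ((‖w‖:ℝ):ℂ) ^ 2 := by
    rw [mul_comm, Complex.mul_conj, Complex.normSq_eq_norm_sq]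
    push_cast
    rfl
  have ha'' : ((‖v‖ : ℝ) : ℂ) ≠ 0 := ha'
  have hb'' : ((‖w‖ : ℝ) : ℂ) ≠ 0 := hb'
  rw [map_div₀, Complex.conj_ofReal]
  field_simp
  linear_combination (↑‖v‖ : ℂ) * hcw

lemma aux_pathconn (r : ℝ) (hr0 : 0 < r) (hr1 : r ≤ 1) :
    IsPathConnected {p : ℂ × ℂ | p.1 ∈ Disk ∧ p.2 ∈ Disk ∧ r ≤ ‖p.1 - p.2‖} := by
  set S : Set (ℂ × ℂ) := {p : ℂ × ℂ | p.1 ∈ Disk ∧ p.2 ∈ Disk ∧ r ≤ ‖p.1 - p.2‖} with hS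
  have hhalf : ‖(2⁻¹ : ℝ) • (1:ℂ)‖ = 1/2 := by
    rw [norm_smul]; simp
  set b : ℂ × ℂ := ((2⁻¹ : ℝ) • (1:ℂ), -((2⁻¹ : ℝ) • (1:ℂ))) with hb
  have hbS : b ∈ S := by
    refine ⟨mem_Disk.2 (by rw [hhalf]; norm_num),
      mem_Disk.2 (by rw [norm_neg, hhalf]; norm_num), ?_⟩
    have : b.1 - b.2 = (1:ℂ) := by
      simp only [hb, sub_neg_eq_add]
      rw [← two_smul ℝ, smul_smul]
      norm_num
    rw [this, norm_one]; exact hr1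
  refine ⟨b, hbS, fun {p} hp => ?_⟩
  obtain ⟨hx, hy, hd⟩ := hp
  set x := p.1 with hx1
  set y := p.2 with hy1
  rw [mem_Disk] at hx hy
  have hdpos : 0 < ‖x - y‖ := lt_of_lt_of_le hr0 hd
  set d : ℂ := (2⁻¹ : ℝ) • (x - y) with hd_def
  have hdnorm : ‖d‖ = ‖x - y‖ / 2 := by rw [hd_def, norm_smul]; simp; ring
  have hdn0 : ‖d‖ ≠ 0 := by rw [hdnorm]; positivity
  set q : ℂ × ℂ := (d, -d) with hq
  set u : ℂ := (‖d‖⁻¹ : ℝ) • d with hu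
  have hunorm : ‖u‖ = 1 := by
    rw [hu, norm_smul, Real.norm_eq_abs, abs_of_nonneg (by positivity), inv_mul_cancel₀ hdn0]
  set q' : ℂ × ℂ := ((2⁻¹ : ℝ) • u, -((2⁻¹ : ℝ) • u)) with hq'
  have stageA : JoinedIn S p q := by
    apply JoinedIn.of_segment_subset
    rintro z ⟨a, c, ha, hc, hac, rfl⟩
    have hc1 : c ≤ 1 := by linarith
    have h1 : (a • p + c • q).1 = (1 - c/2) • x + (-(c/2)) • y := by
      simp only [Prod.fst_add, Prod.smul_fst, hq, hd_def, ← hx1, ← hy1]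
      have ha' : a = 1 - c := by linarith
      rw [ha']
      module
    have h2 : (a • p + c • q).2 = (1 - c/2) • y + (-(c/2)) • x := by
      simp only [Prod.snd_add, Prod.smul_snd, hq, hd_def, ← hx1, ← hy1]
      have ha' : a = 1 - c := by linarith
      rw [ha']
      module
    have hbound : ∀ w v : ℂ, ‖w‖ ≤ 1 → ‖v‖ ≤ 1 → ‖(1 - c/2) • w + (-(c/2)) • v‖ ≤ 1 := by
      intro w v hw hv
      calc ‖(1 - c/2) • w + (-(c/2)) • v‖ ≤ ‖(1 - c/2) • w‖ + ‖(-(c/2)) • v‖ := norm_add_le _ _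
        _ = |1 - c/2| * ‖w‖ + |(-(c/2))| * ‖v‖ := by
            rw [norm_smul, norm_smul, Real.norm_eq_abs, Real.norm_eq_abs]
        _ = (1 - c/2) * ‖w‖ + (c/2) * ‖v‖ := by
            rw [abs_neg, abs_of_nonneg (by linarith : (0:ℝ) ≤ 1 - c/2),
              abs_of_nonneg (by linarith : (0:ℝ) ≤ c/2)]
        _ ≤ 1 := by nlinarith [norm_nonneg w, norm_nonneg v]
    refine ⟨mem_Disk.2 ?_, mem_Disk.2 ?_, ?_⟩
    · rw [h1]; exact hbound _ _ hx hy
    · rw [h2]; exact hbound _ _ hy hx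
    · have hsub : (a • p + c • q).1 - (a • p + c • q).2 = x - y := by
        rw [h1, h2]; module
      rw [hsub]; exact hd
  have stageB : JoinedIn S q q' := by
    apply JoinedIn.of_segment_subset
    rintro z ⟨a, c, ha, hc, hac, rfl⟩
    have h1 : (a • q + c • q').1 = (a + c * (2 * ‖d‖)⁻¹) • d := by
      simp only [Prod.fst_add, Prod.smul_fst, hq, hq', hu, smul_smul]
      rw [← add_smul]
      congr 1
      rw [mul_inv]
    have h2 : (a • q + c • q').2 = -((a + c * (2 * ‖d‖)⁻¹) • d) := by
      simp only [Prod.snd_add, Prod.smul_snd, hq, hq', hu, smul_smul, smul_neg, ← neg_add]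
      rw [← add_smul]
      congr 2
      rw [mul_inv]
    set e : ℝ := a + c * (2 * ‖d‖)⁻¹ with he
    have he0 : 0 ≤ e := by positivity
    have hinv : (2 * ‖d‖)⁻¹ * ‖d‖ = 2⁻¹ := by
      rw [mul_inv, mul_assoc, inv_mul_cancel₀ hdn0, mul_one]
    have hnorm1 : ‖e • d‖ = a * ‖d‖ + c / 2 := by
      rw [norm_smul, Real.norm_eq_abs, abs_of_nonneg he0, he, add_mul, mul_assoc, hinv]
      ring
    have hd1 : ‖d‖ ≤ 1 := by rw [hdnorm]; nlinarith [norm_sub_le x y, hx, hy]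
    have hdr : r / 2 ≤ ‖d‖ := by rw [hdnorm]; linarith
    refine ⟨mem_Disk.2 ?_, mem_Disk.2 ?_, ?_⟩
    · rw [h1, hnorm1]; nlinarith
    · rw [h2, norm_neg, hnorm1]; nlinarith
    · rw [h1, h2, sub_neg_eq_add, ← two_smul ℝ, smul_smul, norm_smul, Real.norm_eq_abs,
        abs_of_nonneg (by positivity)]
      have : 2 * e * ‖d‖ = 2 * (a * ‖d‖) + c := by
        rw [he]; linear_combination (2 * c) * hinv
      rw [this]
      nlinarith
  have stageC : JoinedIn S q' b := by
    have hrank : 1 < Module.rank ℝ ℂ := by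
      rw [Complex.rank_real_complex]; norm_num
    have hsph : IsPathConnected (Metric.sphere (0:ℂ) 1) :=
      isPathConnected_sphere hrank 0 zero_le_one
    have humem : u ∈ Metric.sphere (0:ℂ) 1 := by
      simp only [Metric.mem_sphere, Complex.dist_eq, sub_zero]
      exact hunorm
    have h1mem : (1:ℂ) ∈ Metric.sphere (0:ℂ) 1 := by simp
    have hjoin : JoinedIn (Metric.sphere (0:ℂ) 1) u 1 := hsph.joinedIn u humem 1 h1mem
    have hg : Continuous (fun z : ℂ => (((2⁻¹ : ℝ) • z, -((2⁻¹ : ℝ) • z)) : ℂ × ℂ)) := by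
      exact ((continuous_const_smul _).prodMk (continuous_const_smul _).neg)
    have himage := hjoin.map hg
    have hsub : (fun z : ℂ => (((2⁻¹ : ℝ) • z, -((2⁻¹ : ℝ) • z)) : ℂ × ℂ)) ''
        (Metric.sphere 0 1) ⊆ S := by
      rintro _ ⟨z, hz, rfl⟩
      have hz1 : ‖z‖ = 1 := by simpa [Complex.dist_eq] using hz
      have hn : ‖(2⁻¹ : ℝ) • z‖ = 1/2 := by rw [norm_smul, hz1]; simp
      refine ⟨mem_Disk.2 (by rw [hn]; norm_num),
        mem_Disk.2 (by rw [norm_neg, hn]; norm_num), ?_⟩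
      simp only [sub_neg_eq_add]
      rw [← two_smul ℝ, smul_smul]
      norm_num [hz1]
      exact hr1
    exact himage.mono hsub
  exact ((stageA.trans stageB).trans stageC).symm

lemma aux_pointwise (ε : ℝ) (hε0 : 0 < ε) (f : ℂ → ℂ)
    (hfinj : Set.InjOn f Disk) (hf : ∀ z ∈ Disk, ‖f z - z‖ ≤ ε)
    (A : ℂ × ℂ → ℝ)
    (hAang : ∀ x ∈ Disk, ∀ y ∈ Disk, x ≠ y →
      Complex.exp (2 * Real.pi * Complex.I * (A (x, y) : ℂ)) =
        ((f y - f x) * (starRingEnd ℂ) (y - x)) /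
          ((‖f y - f x‖ : ℂ) * (‖y - x‖ : ℂ)))
    (x : ℂ) (hx : x ∈ Disk) (y : ℂ) (hy : y ∈ Disk)
    (hsep : Real.sqrt ε ≤ ‖x - y‖) :
    |A (x, y) - round (A (x, y))| ≤ Real.sqrt ε := by
  have hs0 : 0 < Real.sqrt ε := Real.sqrt_pos.2 hε0
  have hxypos : 0 < ‖x - y‖ := lt_of_lt_of_le hs0 hsep
  have hxy : x ≠ y := by
    intro h
    rw [h, sub_self, norm_zero] at hxypos
    exact lt_irrefl 0 hxypos
  set v : ℂ := f y - f x with hv_def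
  set w : ℂ := y - x with hw_def
  have hw0 : w ≠ 0 := sub_ne_zero.2 (Ne.symm hxy)
  have hv0 : v ≠ 0 := by
    rw [hv_def, sub_ne_zero]
    intro h
    exact hxy (hfinj hy hx h).symm
  have hwnorm : Real.sqrt ε ≤ ‖w‖ := by rw [hw_def, norm_sub_rev]; exact hsep
  have hvw : ‖v - w‖ ≤ 2 * ε := by
    have h1 : v - w = (f y - y) - (f x - x) := by rw [hv_def, hw_def]; ring
    rw [h1]
    calc ‖(f y - y) - (f x - x)‖ ≤ ‖f y - y‖ + ‖f x - x‖ := norm_sub_le _ _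
      _ ≤ 2 * ε := by linarith [hf y hy, hf x hx]
  have hkey : ‖Complex.exp (2 * Real.pi * Complex.I * (A (x, y) : ℂ)) - 1‖
      = ‖v / ‖v‖ - w / ‖w‖‖ := by
    rw [hAang x hx y hy hxy, ← hv_def, ← hw_def, aux_conj_identity v w hv0 hw0, norm_mul,
      RCLike.norm_conj, norm_div, Complex.norm_real, Real.norm_eq_abs,
      abs_of_nonneg (norm_nonneg w), div_self (norm_ne_zero_iff.2 hw0), one_mul]
  have hbound : ‖Complex.exp (2 * Real.pi * Complex.I * (A (x, y) : ℂ)) - 1‖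
      ≤ 4 * ε / Real.sqrt ε := by
    rw [hkey]
    calc ‖v / ‖v‖ - w / ‖w‖‖ ≤ 2 * ‖v - w‖ / ‖w‖ := aux_unit_sub v w hv0 hw0
      _ ≤ 2 * (2 * ε) / Real.sqrt ε := by gcongr
      _ = 4 * ε / Real.sqrt ε := by ring_nf
  have hfinal := aux_round_close (A (x, y)) (4 * ε / Real.sqrt ε) hbound
  have heq : 4 * ε / Real.sqrt ε / 4 = Real.sqrt ε := by
    rw [show 4 * ε / Real.sqrt ε / 4 = ε / Real.sqrt ε by ring,
      eq_comm, eq_div_iff hs0.ne', Real.mul_self_sqrt hε0.le]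
  rw [heq] at hfinal
  exact hfinal

/-- If `f` is `ε`-close to the identity (`ε < 1/16`), then there is a
unique integer `k` such that every continuous determination `A` of the angle function
satisfies `|A(x,y) - k| ≤ 2 ε^{1/4}/π < 1/2` whenever `‖x - y‖ ≥ √ε`. -/
theorem angle_close_integer_C0 (ε : ℝ) (hε0 : 0 < ε) (hε : ε < 1 / 16) (f : ℂ → ℂ)
    (hfc : ContinuousOn f Disk) (hfinj : Set.InjOn f Disk)
    (hf : ∀ z ∈ Disk, ‖f z - z‖ ≤ ε)
    (A : ℂ × ℂ → ℝ)
    (hAcont : ContinuousOn A {p : ℂ × ℂ | p.1 ∈ Disk ∧ p.2 ∈ Disk ∧ p.1 ≠ p.2})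
    (hAang : ∀ x ∈ Disk, ∀ y ∈ Disk, x ≠ y →
      Complex.exp (2 * Real.pi * Complex.I * (A (x, y) : ℂ)) =
        ((f y - f x) * (starRingEnd ℂ) (y - x)) /
          ((‖f y - f x‖ : ℂ) * (‖y - x‖ : ℂ))) :
    2 * ε ^ ((1 : ℝ) / 4) / Real.pi < 1 / 2 ∧
      ∃! k : ℤ, ∀ x ∈ Disk, ∀ y ∈ Disk, Real.sqrt ε ≤ ‖x - y‖ →
        |A (x, y) - (k : ℝ)| ≤ 2 * ε ^ ((1 : ℝ) / 4) / Real.pi := by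
  have hπ := Real.pi_pos
  set t : ℝ := ε ^ ((1:ℝ)/4) with ht_def
  have ht0 : 0 < t := Real.rpow_pos_of_pos hε0 _
  have ht4 : t ^ (4:ℕ) = ε := by
    rw [ht_def, ← Real.rpow_natCast (ε ^ ((1:ℝ)/4)) 4, ← Real.rpow_mul hε0.le]
    norm_num
  have ht2 : t < 1/2 := by
    by_contra h
    push_neg at h
    have h4 : (1/2:ℝ)^(4:ℕ) ≤ t^(4:ℕ) := pow_le_pow_left₀ (by norm_num) h 4
    rw [ht4] at h4
    norm_num at h4
    linarith
  have hhalf : 2 * t / Real.pi < 1/2 := by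
    rw [div_lt_iff₀ hπ]
    nlinarith [Real.pi_gt_three]
  have hsqrt_eq : Real.sqrt ε = t * t := by
    rw [Real.sqrt_eq_rpow, show (1:ℝ)/2 = 1/4 + 1/4 by norm_num, Real.rpow_add hε0, ht_def]
  have hsqrt_le : Real.sqrt ε ≤ 2 * t / Real.pi := by
    rw [hsqrt_eq]
    have h2 : (1/2:ℝ) ≤ 2/Real.pi := by
      rw [le_div_iff₀ hπ]; nlinarith [Real.pi_le_four]
    calc t * t ≤ (1/2) * t := by nlinarith
      _ ≤ 2/Real.pi * t := by nlinarith
      _ = 2*t/Real.pi := by ring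
  have hs0 : 0 < Real.sqrt ε := Real.sqrt_pos.2 hε0
  have hslt : Real.sqrt ε < 1/4 := by rw [hsqrt_eq]; nlinarith
  have hs1 : Real.sqrt ε ≤ 1 := by linarith
  refine ⟨hhalf, ?_⟩
  set S : Set (ℂ × ℂ) :=
    {p : ℂ × ℂ | p.1 ∈ Disk ∧ p.2 ∈ Disk ∧ Real.sqrt ε ≤ ‖p.1 - p.2‖} with hS_def
  have hpc := aux_pathconn (Real.sqrt ε) hs0 hs1
  have hconn : IsPreconnected S := hpc.isConnected.isPreconnected
  obtain ⟨p₀, hp₀, -⟩ := hpc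
  set g : ℂ × ℂ → ℤ := fun p => round (A p) with hg_def
  have hpt : ∀ p ∈ S, |A p - round (A p)| ≤ Real.sqrt ε := by
    rintro ⟨x, y⟩ ⟨hx, hy, hsep⟩
    exact aux_pointwise ε hε0 f hfinj hf A hAang x hx y hy hsep
  have hAcont' : ContinuousOn A S := by
    apply hAcont.mono
    rintro ⟨x, y⟩ ⟨hx, hy, hsep⟩
    refine ⟨hx, hy, ?_⟩
    intro h
    rw [h, sub_self, norm_zero] at hsep
    linarith
  have hgcont : ContinuousOn g S := by
    intro p hp
    have hc : ContinuousWithinAt A S p := hAcont' p hp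
    have hball : A ⁻¹' (Metric.ball (A p) (1/4)) ∈ nhdsWithin p S :=
      hc (Metric.ball_mem_nhds (A p) (by norm_num : (0:ℝ) < 1/4))
    have hev : ∀ᶠ q in nhdsWithin p S, g q = g p := by
      filter_upwards [hball, self_mem_nhdsWithin] with q hq1 hq2
      have h1 := hpt q hq2
      have h2 := hpt p hp
      have hd : |A q - A p| < 1/4 := by
        have := Metric.mem_ball.1 hq1
        rwa [Real.dist_eq] at this
      have habs : |((round (A q) : ℝ)) - ((round (A p)) : ℝ)| < 1 := by
        obtain ⟨a1, a2⟩ := abs_le.1 h1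
        obtain ⟨b1, b2⟩ := abs_le.1 h2
        obtain ⟨c1, c2⟩ := abs_lt.1 hd
        rw [abs_lt]
        constructor <;> linarith
      have hz : |round (A q) - round (A p)| < (1:ℤ) := by exact_mod_cast habs
      have hz' := abs_lt.1 hz
      have hround : round (A q) = round (A p) := by omega
      simpa [hg_def] using hround
    exact ContinuousWithinAt.congr_of_eventuallyEq continuousWithinAt_const hev rfl
  have hconst : ∀ p ∈ S, g p = g p₀ := fun p hp => hconn.constant hgcont hp hp₀
  refine ⟨g p₀, ?_, ?_⟩
  · intro x hx y hy hsep
    have hpS : ((x, y) : ℂ × ℂ) ∈ S := ⟨hx, hy, hsep⟩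
    have h1 := hpt (x, y) hpS
    have h2 := hconst (x, y) hpS
    have h3 : |A (x, y) - ((g p₀ : ℤ) : ℝ)| = |A (x, y) - (round (A (x, y)) : ℝ)| := by
      rw [← h2]
    rw [h3]
    exact h1.trans hsqrt_le
  · intro k' hk'
    obtain ⟨hx₀, hy₀, hsep₀⟩ := hp₀
    have h1 := hk' p₀.1 hx₀ p₀.2 hy₀ hsep₀
    have h2 : |A p₀ - ((g p₀ : ℤ) : ℝ)| ≤ Real.sqrt ε := hpt p₀ ⟨hx₀, hy₀, hsep₀⟩
    rw [show ((p₀.1, p₀.2) : ℂ × ℂ) = p₀ from rfl] at h1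
    have habs : |((k' : ℤ) : ℝ) - ((g p₀ : ℤ) : ℝ)| < 1 := by
      obtain ⟨a1, a2⟩ := abs_le.1 h1
      obtain ⟨b1, b2⟩ := abs_le.1 h2
      rw [abs_lt]
      constructor <;> nlinarith [hsqrt_le, hhalf]
    have hz : |k' - g p₀| < (1:ℤ) := by exact_mod_cast habs
    have hz' := abs_lt.1 hz
    omega
end
end
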